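/- Limit of little q-Jacobi polynomials to Jacobi polynomials: for real α,β > -1, a nonnegative integer n and real x, lim_{q↑1} p_n(x; q^α, q^β; q) = R_n^{(α,β)}(1-2x), where R_n^{(α,β)} is the Jacobi polynomial normalized by R_n^{(α,β)}(1)=1. -/

import Mathlib

open Filter

/-- finite q-shifted factorial `(a;q)_k = ∏_{j=0}^{k-1} (1 - a q^j)` -/
noncomputable def qPoch (q a : ℝ) (k : ℕ) : ℝ := ∏ j ∈ Finset.range k, (1 - a * q ^ j)

/-- little q-Jacobi polynomial `p_n(x; q^α, q^β; q) = ₂φ₁(q^{-n}, q^{n+1+α+β}; q^{1+α}; q, qx)`. -/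
noncomputable def littleqJacobiP (q α β : ℝ) (n : ℕ) (x : ℝ) : ℝ :=
  ∑ k ∈ Finset.range (n + 1),
    qPoch q (q ^ (-(n : ℤ))) k * qPoch q (q ^ (α + β) * q ^ (n + 1)) k
      / (qPoch q (q ^ α * q) k * qPoch q q k) * (q * x) ^ k

/-- Jacobi polynomial `R_n^{(α,β)}(y) = ₂F₁(-n, n+α+β+1; α+1; (1-y)/2)`,
normalized so that `R_n^{(α,β)}(1) = 1`. -/
noncomputable def jacobiR (n : ℕ) (α β : ℝ) (y : ℝ) : ℝ :=
  ∑ k ∈ Finset.range (n + 1),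
    (∏ j ∈ Finset.range k, (-(n : ℝ) + j)) * (∏ j ∈ Finset.range k, ((n : ℝ) + α + β + 1 + j))
      / ((∏ j ∈ Finset.range k, (α + 1 + j)) * (Nat.factorial k)) * ((1 - y) / 2) ^ k

private lemma prod_one_add (k : ℕ) :
    ((Nat.factorial k : ℝ)) = ∏ j ∈ Finset.range k, ((1 : ℝ) + j) := by
  induction k with
  | zero => simp
  | succ m ih =>
    rw [Finset.prod_range_succ, ← ih, Nat.factorial_succ]
    push_cast; ring

private lemma aux_div (A B C D p : ℝ) (hp : p ≠ 0) :
    (A/p)*(B/p)/((C/p)*(D/p)) = A*B/(C*D) := by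
  rw [div_mul_div_comm, div_mul_div_comm, div_div_div_comm, div_self (mul_ne_zero hp hp), div_one]

private lemma tendsto_ratio (c : ℝ) :
    Tendsto (fun q : ℝ => (1 - q ^ c) / (1 - q)) (nhdsWithin 1 (Set.Ioo 0 1)) (nhds c) := by
  have h : HasDerivAt (fun q : ℝ => q ^ c) (c * (1:ℝ) ^ (c - 1)) 1 :=
    Real.hasDerivAt_rpow_const (Or.inl one_ne_zero)
  have h2 := hasDerivAt_iff_tendsto_slope.mp h
  have hmono : nhdsWithin (1:ℝ) (Set.Ioo 0 1) ≤ nhdsWithin 1 {(1:ℝ)}ᶜ :=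
    nhdsWithin_mono _ (fun y hy => ne_of_lt hy.2)
  have h3 := h2.mono_left hmono
  rw [Real.one_rpow, mul_one] at h3
  refine h3.congr fun q => ?_
  rw [slope_def_field, Real.one_rpow, ← neg_div_neg_eq, neg_sub, neg_sub]

private lemma qPoch_rpow {q : ℝ} (hq : 0 < q) (c : ℝ) (k : ℕ) :
    qPoch q (q ^ c) k = ∏ j ∈ Finset.range k, (1 - q ^ (c + (j : ℝ))) := by
  refine Finset.prod_congr rfl fun j _ => ?_
  rw [Real.rpow_add hq, Real.rpow_natCast]

/-- As `q ↑ 1`, the little q-Jacobi polynomial `p_n(x;q^α,q^β;q)` tends to the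
normalized Jacobi polynomial `R_n^{(α,β)}(1-2x)`. -/
theorem littleqJacobi_tendsto_jacobi (α β : ℝ) (hα : -1 < α) (hβ : -1 < β)
    (n : ℕ) (x : ℝ) :
    Tendsto (fun q : ℝ => littleqJacobiP q α β n x)
      (nhdsWithin 1 (Set.Ioo 0 1)) (nhds (jacobiR n α β (1 - 2 * x))) := by
  have hRy : jacobiR n α β (1 - 2 * x) =
      ∑ k ∈ Finset.range (n + 1),
        (∏ j ∈ Finset.range k, (-(n : ℝ) + j)) *
          (∏ j ∈ Finset.range k, ((n : ℝ) + α + β + 1 + j)) /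
        ((∏ j ∈ Finset.range k, (α + 1 + j)) * (∏ j ∈ Finset.range k, ((1 : ℝ) + j)))
        * (1 * x) ^ k := by
    unfold jacobiR
    refine Finset.sum_congr rfl fun k _ => ?_
    rw [prod_one_add]
    ring_nf
  rw [hRy]
  unfold littleqJacobiP
  refine tendsto_finset_sum _ fun k _ => ?_
  -- limit of each summand
  have htendsto :
      Tendsto (fun q : ℝ =>
        (∏ j ∈ Finset.range k, (1 - q ^ (-(n : ℝ) + (j : ℝ))) / (1 - q)) *
          (∏ j ∈ Finset.range k, (1 - q ^ ((n : ℝ) + α + β + 1 + (j : ℝ))) / (1 - q)) /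
        ((∏ j ∈ Finset.range k, (1 - q ^ (α + 1 + (j : ℝ))) / (1 - q)) *
          (∏ j ∈ Finset.range k, (1 - q ^ ((1 : ℝ) + (j : ℝ))) / (1 - q)))
        * (q * x) ^ k)
      (nhdsWithin 1 (Set.Ioo 0 1))
      (nhds ((∏ j ∈ Finset.range k, (-(n : ℝ) + j)) *
          (∏ j ∈ Finset.range k, ((n : ℝ) + α + β + 1 + j)) /
        ((∏ j ∈ Finset.range k, (α + 1 + j)) * (∏ j ∈ Finset.range k, ((1 : ℝ) + j)))
        * (1 * x) ^ k)) := by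
    have hC : (∏ j ∈ Finset.range k, (α + 1 + (j : ℝ))) ≠ 0 := by
      refine Finset.prod_ne_zero_iff.mpr fun j _ => ?_
      have : (0:ℝ) ≤ (j:ℝ) := Nat.cast_nonneg j
      nlinarith
    have hD : (∏ j ∈ Finset.range k, ((1 : ℝ) + (j : ℝ))) ≠ 0 := by
      refine Finset.prod_ne_zero_iff.mpr fun j _ => ?_
      have : (0:ℝ) ≤ (j:ℝ) := Nat.cast_nonneg j
      nlinarith
    refine Tendsto.mul (Tendsto.div (Tendsto.mul ?_ ?_) (Tendsto.mul ?_ ?_)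
      (mul_ne_zero hC hD)) ?_
    · exact tendsto_finset_prod _ fun j _ => tendsto_ratio _
    · exact tendsto_finset_prod _ fun j _ => tendsto_ratio _
    · exact tendsto_finset_prod _ fun j _ => tendsto_ratio _
    · exact tendsto_finset_prod _ fun j _ => tendsto_ratio _
    · exact ((tendsto_id.mono_left nhdsWithin_le_nhds).mul_const x).pow k
  refine htendsto.congr' ?_
  filter_upwards [self_mem_nhdsWithin] with q hq
  obtain ⟨hq0, hq1⟩ := hq
  have h1q : (1:ℝ) - q ≠ 0 := by linarith
  have e1 : qPoch q (q ^ (-(n : ℤ))) k = ∏ j ∈ Finset.range k, (1 - q ^ (-(n:ℝ) + (j:ℝ))) := by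
    rw [show q ^ (-(n : ℤ)) = q ^ ((-(n:ℝ))) by
      rw [← Real.rpow_intCast q (-(n:ℤ))]; push_cast; ring_nf]
    exact qPoch_rpow hq0 _ k
  have e2 : qPoch q (q ^ (α + β) * q ^ (n + 1)) k =
      ∏ j ∈ Finset.range k, (1 - q ^ ((n:ℝ) + α + β + 1 + (j:ℝ))) := by
    rw [show q ^ (α + β) * q ^ (n + 1) = q ^ ((n:ℝ) + α + β + 1) by
      rw [← Real.rpow_natCast q (n+1), ← Real.rpow_add hq0]; push_cast; ring_nf]
    exact qPoch_rpow hq0 _ k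
  have e3 : qPoch q (q ^ α * q) k = ∏ j ∈ Finset.range k, (1 - q ^ (α + 1 + (j:ℝ))) := by
    rw [show q ^ α * q = q ^ (α + 1) by
      rw [Real.rpow_add hq0, Real.rpow_one]]
    exact qPoch_rpow hq0 _ k
  have e4 : qPoch q q k = ∏ j ∈ Finset.range k, (1 - q ^ ((1:ℝ) + (j:ℝ))) := by
    have := qPoch_rpow hq0 1 k
    rwa [Real.rpow_one] at this
  rw [e1, e2, e3, e4]
  have hp : ((1:ℝ) - q) ^ k ≠ 0 := pow_ne_zero _ h1q
  simp only [Finset.prod_div_distrib, Finset.prod_const, Finset.card_range]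
  rw [aux_div _ _ _ _ _ hp]
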